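/- arXiv:2308.13843 — 3 statements merged into one kernel-verified Lean document; each statement's English description precedes it below -/
import Mathlib

section
/- Suppose a commutative diagram in pro-HPol is given, consisting of pro-morphisms f : X → Y, f' : X' → Y', α : X → X', β : Y → Y' with β ∘ f = f' ∘ α, where α and β are isomorphisms of pro-HPol. If dim f ≤ n, then dim f' ≤ n. -/
universe u

noncomputable section

namespace ShapePaper

open CategoryTheory

/-! ### H-maps: morphisms of the homotopy category HTop -/

/-- The setoid of continuous maps up to homotopy. -/
def homotopySetoid (X Y : Type u) [TopologicalSpace X] [TopologicalSpace Y] :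
    Setoid C(X, Y) :=
  ⟨ContinuousMap.Homotopic, ContinuousMap.Homotopic.equivalence⟩

/-- An H-map `X → Y` is a homotopy class of continuous maps `X → Y`,
i.e. a morphism of the homotopy category `HTop`. -/
def HMap (X Y : Type u) [TopologicalSpace X] [TopologicalSpace Y] : Type u :=
  Quotient (homotopySetoid X Y)

variable {X Y Z W : Type u} [TopologicalSpace X] [TopologicalSpace Y]
  [TopologicalSpace Z] [TopologicalSpace W]

/-- The H-map (homotopy class) of a continuous map. -/
def HMap.mk (f : C(X, Y)) : HMap X Y := Quotient.mk (homotopySetoid X Y) f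

/-- The identity H-map. -/
protected def HMap.id (X : Type u) [TopologicalSpace X] : HMap X X :=
  HMap.mk (ContinuousMap.id X)

/-- Composition of H-maps. -/
protected def HMap.comp (g : HMap Y Z) (f : HMap X Y) : HMap X Z :=
  Quotient.liftOn₂ g f (fun g f => HMap.mk (g.comp f))
    (fun _ _ _ _ hg hf => Quotient.sound (ContinuousMap.Homotopic.comp hg hf))

theorem HMap.comp_assoc (h : HMap Z W) (g : HMap Y Z) (f : HMap X Y) :
    HMap.comp (HMap.comp h g) f = HMap.comp h (HMap.comp g f) := by
  induction h using Quotient.inductionOn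
  induction g using Quotient.inductionOn
  induction f using Quotient.inductionOn
  rfl

theorem HMap.id_comp (f : HMap X Y) : HMap.comp (HMap.id Y) f = f := by
  induction f using Quotient.inductionOn
  rfl

theorem HMap.comp_id (f : HMap X Y) : HMap.comp f (HMap.id X) = f := by
  induction f using Quotient.inductionOn
  rfl

/-! ### Polyhedra and the category HPol -/

/-- A realization of the space `P` as (the space of) a simplicial complex. -/
structure PolyhedralRealization (P : Type u) [TopologicalSpace P] where
  /-- the ambient topological real vector space -/
  E : Type u
  [addCommGroup : AddCommGroup E]
  [module : Module ℝ E]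
  [topE : TopologicalSpace E]
  /-- the simplicial complex -/
  complex : Geometry.SimplicialComplex ℝ E
  /-- `P` is homeomorphic to the space (carrier) of the complex -/
  homeo : P ≃ₜ complex.space

attribute [instance] PolyhedralRealization.addCommGroup PolyhedralRealization.module
  PolyhedralRealization.topE

/-- The realization has dimension `≤ n`: every simplex has at most `n + 1` vertices. -/
def PolyhedralRealization.DimLE {P : Type u} [TopologicalSpace P]
    (R : PolyhedralRealization P) (n : ℕ) : Prop :=
  ∀ s ∈ R.complex.faces, s.card ≤ n + 1

/-- `P` is a polyhedron. -/
def IsPolyhedron (P : Type u) [TopologicalSpace P] : Prop :=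
  Nonempty (PolyhedralRealization P)

/-- `P` is a polyhedron of dimension `≤ n`. -/
def IsPolyhedronDimLE (P : Type u) [TopologicalSpace P] (n : ℕ) : Prop :=
  ∃ R : PolyhedralRealization P, R.DimLE n

/-- `X` is an object of `HPol`, i.e. has the homotopy type of a polyhedron. -/
def InHPol (X : Type u) [TopologicalSpace X] : Prop :=
  ∃ (P : Type u) (_ : TopologicalSpace P), IsPolyhedron P ∧
    Nonempty (ContinuousMap.HomotopyEquiv X P)

/-- The H-map `f` factors in `HPol` through some polyhedron of dimension `≤ n`. -/
def HMap.FactorsThruPolyhedronDimLE (f : HMap X Y) (n : ℕ) : Prop :=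
  ∃ (P : Type u) (_ : TopologicalSpace P), IsPolyhedronDimLE P n ∧
    ∃ (u : HMap X P) (v : HMap P Y), f = v.comp u

/-- `X` is homotopy dominated by a polyhedron of dimension `≤ n`. -/
def DominatedByPolyhedronDimLE (X : Type u) [TopologicalSpace X] (n : ℕ) : Prop :=
  ∃ (P : Type u) (_ : TopologicalSpace P), IsPolyhedronDimLE P n ∧
    ∃ (s : HMap X P) (d : HMap P X), d.comp s = HMap.id X

/-! ### Inverse systems in HPol -/

/-- An inverse system in the category `HPol`: a directed index set `Idx`, spaces `obj i`
having the homotopy type of polyhedra, and bonding H-maps. -/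
structure InverseSystem : Type (u + 1) where
  /-- the index set -/
  Idx : Type u
  [preorder : Preorder Idx]
  [idxNonempty : Nonempty Idx]
  directed : ∀ a b : Idx, ∃ c, a ≤ c ∧ b ≤ c
  /-- the terms of the system -/
  obj : Idx → Type u
  [topObj : ∀ i, TopologicalSpace (obj i)]
  inHPol : ∀ i, InHPol (obj i)
  /-- the bonding H-maps -/
  bond : ∀ {i j : Idx}, i ≤ j → HMap (obj j) (obj i)
  bond_refl : ∀ i : Idx, bond (le_refl i) = HMap.id (obj i)
  bond_trans : ∀ {i j k : Idx} (hij : i ≤ j) (hjk : j ≤ k),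
    HMap.comp (bond hij) (bond hjk) = bond (hij.trans hjk)

attribute [instance] InverseSystem.preorder InverseSystem.idxNonempty InverseSystem.topObj

/-- A morphism of inverse systems in `HPol`. -/
structure SysMor (𝓧 𝓨 : InverseSystem.{u}) : Type u where
  /-- the index function `φ` -/
  idxMap : 𝓨.Idx → 𝓧.Idx
  /-- the H-maps `f_μ : X_{φ(μ)} → Y_μ` -/
  hmap : ∀ μ : 𝓨.Idx, HMap (𝓧.obj (idxMap μ)) (𝓨.obj μ)
  coherent : ∀ {μ μ' : 𝓨.Idx} (h : μ ≤ μ'),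
    ∃ (l : 𝓧.Idx) (h₁ : idxMap μ ≤ l) (h₂ : idxMap μ' ≤ l),
      (𝓨.bond h).comp ((hmap μ').comp (𝓧.bond h₂)) = (hmap μ).comp (𝓧.bond h₁)

variable {𝓧 𝓨 𝓩 : InverseSystem.{u}}

/-- `f_{μλ} := f_μ ∘ p_{φ(μ)λ}` for `λ ≥ φ(μ)`. -/
def SysMor.shift (F : SysMor 𝓧 𝓨) (μ : 𝓨.Idx) {l : 𝓧.Idx} (h : F.idxMap μ ≤ l) :
    HMap (𝓧.obj l) (𝓨.obj μ) :=
  (F.hmap μ).comp (𝓧.bond h)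

theorem SysMor.shift_comp (F : SysMor 𝓧 𝓨) (μ : 𝓨.Idx) {l l' : 𝓧.Idx}
    (h : F.idxMap μ ≤ l) (h' : l ≤ l') :
    (F.shift μ h).comp (𝓧.bond h') = F.shift μ (h.trans h') := by
  rw [SysMor.shift, SysMor.shift, HMap.comp_assoc, 𝓧.bond_trans]

/-- Coherence, pushed up to all larger indices. -/
theorem SysMor.coherent' (F : SysMor 𝓧 𝓨) {μ μ' : 𝓨.Idx} (h : μ ≤ μ') :
    ∃ (l : 𝓧.Idx) (h₁ : F.idxMap μ ≤ l) (h₂ : F.idxMap μ' ≤ l),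
      ∀ {l' : 𝓧.Idx} (hl : l ≤ l'),
        (𝓨.bond h).comp ((F.hmap μ').comp (𝓧.bond (h₂.trans hl))) =
          (F.hmap μ).comp (𝓧.bond (h₁.trans hl)) := by
  obtain ⟨l, h₁, h₂, heq⟩ := F.coherent h
  refine ⟨l, h₁, h₂, ?_⟩
  intro l' hl
  have := congrArg (fun t => HMap.comp t (𝓧.bond hl)) heq
  simpa only [HMap.comp_assoc, InverseSystem.bond_trans] using this

/-- The dimension of a morphism of inverse systems is `≤ n`. -/
def SysMor.DimLE (F : SysMor 𝓧 𝓨) (n : ℕ) : Prop :=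
  ∀ μ : 𝓨.Idx, ∃ (l : 𝓧.Idx) (h : F.idxMap μ ≤ l),
    (F.shift μ h).FactorsThruPolyhedronDimLE n

/-- The dimension of an inverse system is `≤ n` : every term is homotopy dominated by
a polyhedron of dimension `≤ n`. -/
def InverseSystem.DimLE (𝓧 : InverseSystem.{u}) (n : ℕ) : Prop :=
  ∀ i : 𝓧.Idx, DominatedByPolyhedronDimLE (𝓧.obj i) n

/-- Equivalence of morphisms of inverse systems. -/
def SysMor.Equiv (F G : SysMor 𝓧 𝓨) : Prop :=
  ∀ μ : 𝓨.Idx, ∃ (l : 𝓧.Idx) (h₁ : F.idxMap μ ≤ l) (h₂ : G.idxMap μ ≤ l),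
    F.shift μ h₁ = G.shift μ h₂

/-- A pro-morphism (morphism of pro-HPol) is an equivalence class of morphisms
of inverse systems. -/
def ProMor (𝓧 𝓨 : InverseSystem.{u}) : Type u :=
  Quot (@SysMor.Equiv 𝓧 𝓨)

/-- The pro-morphism represented by a morphism of inverse systems. -/
def ProMor.mk (F : SysMor 𝓧 𝓨) : ProMor 𝓧 𝓨 := Quot.mk _ F

/-- The dimension of a pro-morphism is `≤ n` if it admits a representative of
dimension `≤ n`. -/
def ProMor.DimLE (f : ProMor 𝓧 𝓨) (n : ℕ) : Prop :=
  ∃ F : SysMor 𝓧 𝓨, ProMor.mk F = f ∧ F.DimLE n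

/-- The identity morphism of an inverse system. -/
def SysMor.identity (𝓧 : InverseSystem.{u}) : SysMor 𝓧 𝓧 where
  idxMap := id
  hmap i := HMap.id (𝓧.obj i)
  coherent := by
    intro μ μ' h
    refine ⟨μ', h, le_refl _, ?_⟩
    show (𝓧.bond h).comp ((HMap.id _).comp (𝓧.bond (le_refl μ'))) =
      (HMap.id _).comp (𝓧.bond h)
    rw [HMap.id_comp, HMap.id_comp, 𝓧.bond_trans]

/-- Composition of morphisms of inverse systems. -/
def SysMor.comp (G : SysMor 𝓨 𝓩) (F : SysMor 𝓧 𝓨) : SysMor 𝓧 𝓩 where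
  idxMap := F.idxMap ∘ G.idxMap
  hmap ν := (G.hmap ν).comp (F.hmap (G.idxMap ν))
  coherent := by
    intro ν ν' h
    obtain ⟨μ, hμ₁, hμ₂, hg⟩ := G.coherent h
    obtain ⟨l₁, h₁₁, h₁₂, hf₁⟩ := F.coherent' hμ₁
    obtain ⟨l₂, h₂₁, h₂₂, hf₂⟩ := F.coherent' hμ₂
    obtain ⟨l, hl₁, hl₂⟩ := 𝓧.directed l₁ l₂
    refine ⟨l, h₁₁.trans hl₁, h₂₁.trans hl₂, ?_⟩
    have e₁ := hf₁ hl₁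
    have e₂ := hf₂ hl₂
    have hg₂ := congrArg
      (fun t => HMap.comp t ((F.hmap μ).comp (𝓧.bond (h₂₂.trans hl₂)))) hg
    simp only [HMap.comp_assoc] at hg₂ e₁ e₂ ⊢
    rw [← e₂, hg₂, ← e₁]

/-- Composition of pro-morphisms (via choice of representatives). -/
def ProMor.comp (g : ProMor 𝓨 𝓩) (f : ProMor 𝓧 𝓨) : ProMor 𝓧 𝓩 :=
  ProMor.mk ((Quot.out g).comp (Quot.out f))

/-- The identity pro-morphism. -/
protected def ProMor.id (𝓧 : InverseSystem.{u}) : ProMor 𝓧 𝓧 :=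
  ProMor.mk (SysMor.identity 𝓧)

/-- `α` is an isomorphism of pro-HPol. -/
def ProMor.IsIso (α : ProMor 𝓧 𝓨) : Prop :=
  ∃ β : ProMor 𝓨 𝓧, β.comp α = ProMor.id 𝓧 ∧ α.comp β = ProMor.id 𝓨

/-! ### Restriction to a cofinal subset -/

/-- The subsystem of `𝓨` determined by a cofinal subset `S` of the index set. -/
def InverseSystem.restrict (𝓨 : InverseSystem.{u}) (S : Set 𝓨.Idx)
    (hcof : ∀ μ : 𝓨.Idx, ∃ μ' ∈ S, μ ≤ μ') : InverseSystem.{u} where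
  Idx := ↥S
  idxNonempty := by
    obtain ⟨μ⟩ := 𝓨.idxNonempty
    obtain ⟨μ', hs, -⟩ := hcof μ
    exact ⟨⟨μ', hs⟩⟩
  directed a b := by
    obtain ⟨c, hac, hbc⟩ := 𝓨.directed a b
    obtain ⟨c', hs, hcc'⟩ := hcof c
    exact ⟨⟨c', hs⟩, Subtype.coe_le_coe.mp (le_trans hac hcc'),
      Subtype.coe_le_coe.mp (le_trans hbc hcc')⟩
  obj i := 𝓨.obj i
  topObj i := 𝓨.topObj i
  inHPol i := 𝓨.inHPol i
  bond h := 𝓨.bond h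
  bond_refl i := 𝓨.bond_refl i
  bond_trans h₁ h₂ := 𝓨.bond_trans h₁ h₂

/-- The morphism induced by `F : 𝓧 → 𝓨` and the inclusion of a cofinal subset of
the index set of `𝓨`. -/
def SysMor.restrict (F : SysMor 𝓧 𝓨) (S : Set 𝓨.Idx)
    (hcof : ∀ μ : 𝓨.Idx, ∃ μ' ∈ S, μ ≤ μ') : SysMor 𝓧 (𝓨.restrict S hcof) where
  idxMap μ := F.idxMap μ.val
  hmap μ := F.hmap μ.val
  coherent := by
    intro μ μ' h
    exact F.coherent h

/-! ### Expansions and shape dimension -/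

/-- An `HPol`-expansion of the topological space `X`. -/
structure Expansion (X : Type u) [TopologicalSpace X] (𝓧 : InverseSystem.{u}) where
  /-- the projection H-maps `p_λ : X → X_λ` -/
  proj : ∀ l : 𝓧.Idx, HMap X (𝓧.obj l)
  proj_bond : ∀ {l l' : 𝓧.Idx} (h : l ≤ l'), (𝓧.bond h).comp (proj l') = proj l
  /-- every H-map into a space of `HPol` factors through some term of the system -/
  factors : ∀ (P : Type u) [TopologicalSpace P], InHPol P → ∀ f : HMap X P,
    ∃ (l : 𝓧.Idx) (g : HMap (𝓧.obj l) P), g.comp (proj l) = f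
  /-- the factorization is unique after passing to a larger index -/
  factors_unique : ∀ (P : Type u) [TopologicalSpace P], InHPol P →
    ∀ (l : 𝓧.Idx) (g g' : HMap (𝓧.obj l) P), g.comp (proj l) = g'.comp (proj l) →
      ∃ (l' : 𝓧.Idx) (h : l ≤ l'), g.comp (𝓧.bond h) = g'.comp (𝓧.bond h)

/-- The shape dimension of a topological space is `≤ n`: `X` admits an
`HPol`-expansion all of whose terms are homotopy dominated by polyhedra of
dimension `≤ n`. -/
def ShapeDimLE (X : Type u) [TopologicalSpace X] (n : ℕ) : Prop :=
  ∃ (𝓧 : InverseSystem.{u}) (_ : Expansion X 𝓧), 𝓧.DimLE n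

/-- The morphism of inverse systems `F` represents the H-map `f` with respect to the
expansions `pX` and `pY`, i.e. `q_μ ∘ f = f_μ ∘ p_{φ(μ)}` for all `μ`. -/
def Represents {X Y : Type u} [TopologicalSpace X] [TopologicalSpace Y]
    {𝓧 𝓨 : InverseSystem.{u}} (pX : Expansion X 𝓧) (pY : Expansion Y 𝓨)
    (f : HMap X Y) (F : SysMor 𝓧 𝓨) : Prop :=
  ∀ μ : 𝓨.Idx, (F.hmap μ).comp (pX.proj (F.idxMap μ)) = (pY.proj μ).comp f

/-- The shape dimension of an H-map `f : X → Y` is `≤ n`: the shape morphism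
induced by `f` admits a representation by a pro-morphism of dimension `≤ n`. -/
def HMapShapeDimLE {X Y : Type u} [TopologicalSpace X] [TopologicalSpace Y]
    (f : HMap X Y) (n : ℕ) : Prop :=
  ∃ (𝓧 𝓨 : InverseSystem.{u}) (pX : Expansion X 𝓧) (pY : Expansion Y 𝓨)
    (F : SysMor 𝓧 𝓨), Represents pX pY f F ∧ (ProMor.mk F).DimLE n

/-- The shape dimension of a space, as an extended natural number. -/
def shapeDim (X : Type u) [TopologicalSpace X] : ℕ∞ :=
  sInf {n : ℕ∞ | ∃ m : ℕ, n = (m : ℕ∞) ∧ ShapeDimLE X m}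

/-- The shape dimension of an H-map, as an extended natural number. -/
def hmapShapeDim {X Y : Type u} [TopologicalSpace X] [TopologicalSpace Y]
    (f : HMap X Y) : ℕ∞ :=
  sInf {n : ℕ∞ | ∃ m : ℕ, n = (m : ℕ∞) ∧ HMapShapeDimLE f m}

end ShapePaper

namespace ShapePaper

section Aux

variable {𝓦 𝓧 𝓨 𝓩 : InverseSystem.{u}}

theorem SysMor.shift_refl (F : SysMor 𝓧 𝓨) (μ : 𝓨.Idx) :
    F.shift μ (le_refl (F.idxMap μ)) = F.hmap μ := by
  rw [SysMor.shift, 𝓧.bond_refl, HMap.comp_id]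

theorem SysMor.shift_ext {F G : SysMor 𝓧 𝓨} {μ : 𝓨.Idx} {l : 𝓧.Idx}
    (h₁ : F.idxMap μ ≤ l) (h₂ : G.idxMap μ ≤ l)
    (heq : F.shift μ h₁ = G.shift μ h₂) {l' : 𝓧.Idx} (hl : l ≤ l') :
    F.shift μ (h₁.trans hl) = G.shift μ (h₂.trans hl) := by
  rw [← SysMor.shift_comp F μ h₁ hl, heq, SysMor.shift_comp]

theorem SysMor.equiv_refl (F : SysMor 𝓧 𝓨) : F.Equiv F :=
  fun μ => ⟨F.idxMap μ, le_refl _, le_refl _, rfl⟩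

theorem SysMor.equiv_symm {F G : SysMor 𝓧 𝓨} (h : F.Equiv G) : G.Equiv F := by
  intro μ
  obtain ⟨l, h₁, h₂, e⟩ := h μ
  exact ⟨l, h₂, h₁, e.symm⟩

theorem SysMor.equiv_trans {F G H : SysMor 𝓧 𝓨} (h : F.Equiv G) (h' : G.Equiv H) :
    F.Equiv H := by
  intro μ
  obtain ⟨l₁, h₁, h₂, e₁⟩ := h μ
  obtain ⟨l₂, h₃, h₄, e₂⟩ := h' μ
  obtain ⟨l, ha, hb⟩ := 𝓧.directed l₁ l₂
  exact ⟨l, h₁.trans ha, h₄.trans hb,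
    (SysMor.shift_ext h₁ h₂ e₁ ha).trans (SysMor.shift_ext h₃ h₄ e₂ hb)⟩

theorem SysMor.equiv_equivalence : Equivalence (@SysMor.Equiv 𝓧 𝓨) :=
  ⟨SysMor.equiv_refl, SysMor.equiv_symm, SysMor.equiv_trans⟩

theorem ProMor.exact {F G : SysMor 𝓧 𝓨} (h : ProMor.mk F = ProMor.mk G) :
    F.Equiv G :=
  (SysMor.equiv_equivalence.eqvGen_iff).mp (Quot.eqvGen_exact h)

theorem ProMor.mk_out (f : ProMor 𝓧 𝓨) : ProMor.mk (Quot.out f) = f :=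
  Quot.out_eq f

/-- Composition of morphisms of inverse systems respects equivalence. -/
theorem SysMor.comp_equiv {F₁ F₂ : SysMor 𝓧 𝓨} {G₁ G₂ : SysMor 𝓨 𝓩}
    (hF : F₁.Equiv F₂) (hG : G₁.Equiv G₂) : (G₁.comp F₁).Equiv (G₂.comp F₂) := by
  intro ν
  obtain ⟨m, hm₁, hm₂, eG⟩ := hG ν
  obtain ⟨l₁, a₁, b₁, e₁⟩ := F₁.coherent' hm₁
  obtain ⟨l₂, a₂, b₂, e₂⟩ := F₂.coherent' hm₂
  obtain ⟨l₃, c₁, c₂, eF⟩ := hF m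
  obtain ⟨l₄, hd₁, hd₂⟩ := 𝓧.directed l₁ l₂
  obtain ⟨l, he₁, he₂⟩ := 𝓧.directed l₄ l₃
  have hl₁ : l₁ ≤ l := hd₁.trans he₁
  have hl₂ : l₂ ≤ l := hd₂.trans he₁
  have hl₃ : l₃ ≤ l := he₂
  refine ⟨l, a₁.trans hl₁, a₂.trans hl₂, ?_⟩
  have E1 : (F₁.hmap (G₁.idxMap ν)).comp (𝓧.bond (a₁.trans hl₁)) =
      (𝓨.bond hm₁).comp ((F₁.hmap m).comp (𝓧.bond (b₁.trans hl₁))) := (e₁ hl₁).symm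
  have E2 : (𝓨.bond hm₂).comp ((F₂.hmap m).comp (𝓧.bond (b₂.trans hl₂))) =
      (F₂.hmap (G₂.idxMap ν)).comp (𝓧.bond (a₂.trans hl₂)) := e₂ hl₂
  have EF : (F₁.hmap m).comp (𝓧.bond (b₁.trans hl₁)) =
      (F₂.hmap m).comp (𝓧.bond (b₂.trans hl₂)) :=
    SysMor.shift_ext c₁ c₂ eF hl₃
  show ((G₁.hmap ν).comp (F₁.hmap (G₁.idxMap ν))).comp (𝓧.bond (a₁.trans hl₁)) =
    ((G₂.hmap ν).comp (F₂.hmap (G₂.idxMap ν))).comp (𝓧.bond (a₂.trans hl₂))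
  calc ((G₁.hmap ν).comp (F₁.hmap (G₁.idxMap ν))).comp (𝓧.bond (a₁.trans hl₁))
      = (G₁.hmap ν).comp ((F₁.hmap (G₁.idxMap ν)).comp (𝓧.bond (a₁.trans hl₁))) :=
        HMap.comp_assoc _ _ _
    _ = (G₁.hmap ν).comp ((𝓨.bond hm₁).comp ((F₁.hmap m).comp (𝓧.bond (b₁.trans hl₁)))) := by
        rw [E1]
    _ = ((G₁.hmap ν).comp (𝓨.bond hm₁)).comp ((F₁.hmap m).comp (𝓧.bond (b₁.trans hl₁))) :=
        (HMap.comp_assoc _ _ _).symm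
    _ = ((G₂.hmap ν).comp (𝓨.bond hm₂)).comp ((F₂.hmap m).comp (𝓧.bond (b₂.trans hl₂))) := by
        rw [EF]; exact congrArg (fun t => HMap.comp t _) eG
    _ = (G₂.hmap ν).comp ((𝓨.bond hm₂).comp ((F₂.hmap m).comp (𝓧.bond (b₂.trans hl₂)))) :=
        HMap.comp_assoc _ _ _
    _ = (G₂.hmap ν).comp ((F₂.hmap (G₂.idxMap ν)).comp (𝓧.bond (a₂.trans hl₂))) := by
        rw [E2]
    _ = ((G₂.hmap ν).comp (F₂.hmap (G₂.idxMap ν))).comp (𝓧.bond (a₂.trans hl₂)) :=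
        (HMap.comp_assoc _ _ _).symm

theorem ProMor.mk_comp (G : SysMor 𝓨 𝓩) (F : SysMor 𝓧 𝓨) :
    ProMor.comp (ProMor.mk G) (ProMor.mk F) = ProMor.mk (G.comp F) :=
  Quot.sound (SysMor.comp_equiv (ProMor.exact (ProMor.mk_out (ProMor.mk F)))
    (ProMor.exact (ProMor.mk_out (ProMor.mk G))))

theorem SysMor.comp_assoc_equiv (H : SysMor 𝓩 𝓦) (G : SysMor 𝓨 𝓩) (F : SysMor 𝓧 𝓨) :
    ((H.comp G).comp F).Equiv (H.comp (G.comp F)) := by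
  intro ν
  refine ⟨F.idxMap (G.idxMap (H.idxMap ν)), le_refl _, le_refl _, ?_⟩
  refine (SysMor.shift_refl ((H.comp G).comp F) ν).trans
    (Eq.trans ?_ (SysMor.shift_refl (H.comp (G.comp F)) ν).symm)
  exact HMap.comp_assoc _ _ _

theorem ProMor.comp_assoc' (h : ProMor 𝓩 𝓦) (g : ProMor 𝓨 𝓩) (f : ProMor 𝓧 𝓨) :
    ProMor.comp (ProMor.comp h g) f = ProMor.comp h (ProMor.comp g f) := by
  conv_lhs => rw [← ProMor.mk_out f, ← ProMor.mk_out g, ← ProMor.mk_out h]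
  conv_rhs => rw [← ProMor.mk_out f, ← ProMor.mk_out g, ← ProMor.mk_out h]
  rw [ProMor.mk_comp, ProMor.mk_comp, ProMor.mk_comp, ProMor.mk_comp]
  exact Quot.sound (SysMor.comp_assoc_equiv _ _ _)

theorem SysMor.comp_id_equiv (F : SysMor 𝓧 𝓨) :
    (F.comp (SysMor.identity 𝓧)).Equiv F := by
  intro μ
  refine ⟨F.idxMap μ, le_refl _, le_refl _, ?_⟩
  refine (SysMor.shift_refl (F.comp (SysMor.identity 𝓧)) μ).trans
    (Eq.trans ?_ (SysMor.shift_refl F μ).symm)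
  exact HMap.comp_id _

theorem ProMor.comp_id' (f : ProMor 𝓧 𝓨) : ProMor.comp f (ProMor.id 𝓧) = f := by
  conv_lhs => rw [← ProMor.mk_out f]
  rw [ProMor.id, ProMor.mk_comp]
  exact (Quot.sound (SysMor.comp_id_equiv (Quot.out f))).trans (ProMor.mk_out f)

/-- Post-composition preserves `DimLE`. -/
theorem SysMor.dimLE_comp_left (G : SysMor 𝓨 𝓩) (F : SysMor 𝓧 𝓨) {n : ℕ}
    (hF : F.DimLE n) : (G.comp F).DimLE n := by
  intro ν
  obtain ⟨l, h, P, tP, hP, u, v, huv⟩ := hF (G.idxMap ν)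
  refine ⟨l, h, P, tP, hP, u, (G.hmap ν).comp v, ?_⟩
  show ((G.hmap ν).comp (F.hmap (G.idxMap ν))).comp (𝓧.bond h) = _
  calc ((G.hmap ν).comp (F.hmap (G.idxMap ν))).comp (𝓧.bond h)
      = (G.hmap ν).comp ((F.hmap (G.idxMap ν)).comp (𝓧.bond h)) := HMap.comp_assoc _ _ _
    _ = (G.hmap ν).comp (v.comp u) := by
        rw [show (F.hmap (G.idxMap ν)).comp (𝓧.bond h) = v.comp u from huv]
    _ = ((G.hmap ν).comp v).comp u := (HMap.comp_assoc _ _ _).symm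

/-- Pre-composition preserves `DimLE`. -/
theorem SysMor.dimLE_comp_right (F : SysMor 𝓧 𝓨) (A : SysMor 𝓦 𝓧) {n : ℕ}
    (hF : F.DimLE n) : (F.comp A).DimLE n := by
  intro μ
  obtain ⟨l, hl, P, tP, hP, u, v, huv⟩ := hF μ
  obtain ⟨m, h₁, h₂, e⟩ := A.coherent hl
  refine ⟨m, h₁, P, tP, hP, u.comp ((A.hmap l).comp (𝓦.bond h₂)), v, ?_⟩
  show ((F.hmap μ).comp (A.hmap (F.idxMap μ))).comp (𝓦.bond h₁) = _
  calc ((F.hmap μ).comp (A.hmap (F.idxMap μ))).comp (𝓦.bond h₁)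
      = (F.hmap μ).comp ((A.hmap (F.idxMap μ)).comp (𝓦.bond h₁)) := HMap.comp_assoc _ _ _
    _ = (F.hmap μ).comp ((𝓧.bond hl).comp ((A.hmap l).comp (𝓦.bond h₂))) := by rw [← e]
    _ = ((F.hmap μ).comp (𝓧.bond hl)).comp ((A.hmap l).comp (𝓦.bond h₂)) :=
        (HMap.comp_assoc _ _ _).symm
    _ = (v.comp u).comp ((A.hmap l).comp (𝓦.bond h₂)) := by
        rw [show (F.hmap μ).comp (𝓧.bond hl) = v.comp u from huv]
    _ = v.comp (u.comp ((A.hmap l).comp (𝓦.bond h₂))) := HMap.comp_assoc _ _ _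

end Aux

/-- **Proposition 2.10.** Suppose a commutative diagram `β ∘ f = f' ∘ α` is given in
pro-HPol, with `α : 𝐗 → 𝐗'` and `β : 𝐘 → 𝐘'` isomorphisms. If `dim f ≤ n`,
then `dim f' ≤ n`. -/
theorem proMor_dimLE_of_commSq (𝓧 𝓨 𝓧' 𝓨' : InverseSystem.{u})
    (f : ProMor 𝓧 𝓨) (f' : ProMor 𝓧' 𝓨') (α : ProMor 𝓧 𝓧') (β : ProMor 𝓨 𝓨')
    (hα : α.IsIso) (hβ : β.IsIso) (hcomm : β.comp f = f'.comp α)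
    (n : ℕ) (hf : f.DimLE n) : f'.DimLE n := by
  obtain ⟨αi, hαi1, hαi2⟩ := hα
  obtain ⟨F, hFm, hFd⟩ := hf
  set Ai : SysMor 𝓧' 𝓧 := Quot.out αi with hAi
  set B : SysMor 𝓨 𝓨' := Quot.out β with hB
  refine ⟨B.comp (F.comp Ai), ?_, ?_⟩
  · have : ProMor.mk (B.comp (F.comp Ai)) = β.comp (f.comp αi) := by
      rw [← ProMor.mk_comp, ← ProMor.mk_comp, hFm, ProMor.mk_out, ProMor.mk_out]
    rw [this, ← ProMor.comp_assoc', hcomm, ProMor.comp_assoc', hαi2, ProMor.comp_id']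
  · exact SysMor.dimLE_comp_left B _ (SysMor.dimLE_comp_right F Ai hFd)

end ShapePaper
end
end

section
/- Let F : X → Y be a shape morphism of topological spaces. If sd X ≤ n or sd Y ≤ n, then sd F ≤ n. -/
universe u

noncomputable section

namespace ShapePaper

/-- A polyhedron of dimension `≤ n` is in `HPol`. -/
theorem InHPol.of_dimLE {P : Type u} [TopologicalSpace P] {n : ℕ}
    (hP : IsPolyhedronDimLE P n) : InHPol P := by
  obtain ⟨R, -⟩ := hP
  exact ⟨P, ‹_›, ⟨R⟩, ⟨ContinuousMap.HomotopyEquiv.refl P⟩⟩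

/-- Key lemma for the case `sd X ≤ n`: any H-map from a term of an expansion of `X`
into an object of `HPol` factors, after passing to a larger index, through a
polyhedron of dimension `≤ n`. -/
theorem factors_of_shapeDimLE_src {X : Type u} [TopologicalSpace X]
    {𝓧 : InverseSystem.{u}} (pX : Expansion X 𝓧) {n : ℕ} (hX : ShapeDimLE X n)
    (i : 𝓧.Idx) (Q : Type u) [TopologicalSpace Q] (hQ : InHPol Q)
    (f : HMap (𝓧.obj i) Q) :
    ∃ (l : 𝓧.Idx) (h : i ≤ l), (f.comp (𝓧.bond h)).FactorsThruPolyhedronDimLE n := by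
  obtain ⟨𝓧', pX', hdim⟩ := hX
  -- factor `f ∘ p_i : X → Q` through a term of the `n`-dimensional expansion
  obtain ⟨j, g, hg⟩ := pX'.factors Q hQ (f.comp (pX.proj i))
  obtain ⟨P, _, hP, s, d, hds⟩ := hdim j
  -- factor `s ∘ p'_j : X → P` back through `𝓧`
  obtain ⟨l₀, u', hu'⟩ := pX.factors P (InHPol.of_dimLE hP) (s.comp (pX'.proj j))
  obtain ⟨l, hl₀, hil⟩ := 𝓧.directed l₀ i
  have hgd : (g.comp d).comp s = g := by
    rw [HMap.comp_assoc, hds, HMap.comp_id]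
  have key : (((g.comp d).comp u').comp (𝓧.bond hl₀)).comp (pX.proj l) =
      (f.comp (𝓧.bond hil)).comp (pX.proj l) :=
    calc (((g.comp d).comp u').comp (𝓧.bond hl₀)).comp (pX.proj l)
        = ((g.comp d).comp u').comp (pX.proj l₀) := by
          rw [HMap.comp_assoc, pX.proj_bond]
      _ = (g.comp d).comp (s.comp (pX'.proj j)) := by
          rw [HMap.comp_assoc, hu']
      _ = g.comp (pX'.proj j) := by rw [← HMap.comp_assoc, hgd]
      _ = f.comp (pX.proj i) := hg
      _ = (f.comp (𝓧.bond hil)).comp (pX.proj l) := by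
          rw [HMap.comp_assoc, pX.proj_bond]
  obtain ⟨l', hll', heq⟩ := pX.factors_unique Q hQ l _ _ key
  refine ⟨l', hil.trans hll', P, ‹_›, hP, u'.comp (𝓧.bond (hl₀.trans hll')),
    g.comp d, ?_⟩
  have h1 : (f.comp (𝓧.bond hil)).comp (𝓧.bond hll') =
      f.comp (𝓧.bond (hil.trans hll')) := by
    rw [HMap.comp_assoc, 𝓧.bond_trans]
  have h2 : ((((g.comp d).comp u').comp (𝓧.bond hl₀))).comp (𝓧.bond hll') =
      (g.comp d).comp (u'.comp (𝓧.bond (hl₀.trans hll'))) := by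
    rw [HMap.comp_assoc ((g.comp d).comp u'), 𝓧.bond_trans, HMap.comp_assoc]
  rw [← h1, ← heq, h2]

/-- Key lemma for the case `sd Y ≤ n`: every bonding map of an expansion of `Y`
factors, after passing to a larger index, through a polyhedron of dimension `≤ n`. -/
theorem bond_factors_of_shapeDimLE {Y : Type u} [TopologicalSpace Y]
    {𝓨 : InverseSystem.{u}} (pY : Expansion Y 𝓨) {n : ℕ} (hY : ShapeDimLE Y n)
    (μ : 𝓨.Idx) :
    ∃ (μ' : 𝓨.Idx) (h : μ ≤ μ'), (𝓨.bond h).FactorsThruPolyhedronDimLE n := by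
  obtain ⟨𝓨', pY', hdim⟩ := hY
  obtain ⟨ν, g, hg⟩ := pY'.factors (𝓨.obj μ) (𝓨.inHPol μ) (pY.proj μ)
  obtain ⟨μ₁, k, hk⟩ := pY.factors (𝓨'.obj ν) (𝓨'.inHPol ν) (pY'.proj ν)
  obtain ⟨μ₂, hμ₁, hμ⟩ := 𝓨.directed μ₁ μ
  have key : ((g.comp k).comp (𝓨.bond hμ₁)).comp (pY.proj μ₂) =
      (𝓨.bond hμ).comp (pY.proj μ₂) := by
    rw [HMap.comp_assoc, pY.proj_bond, pY.proj_bond, HMap.comp_assoc, hk, hg]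
  obtain ⟨μ₃, hμ₂₃, heq⟩ := pY.factors_unique (𝓨.obj μ) (𝓨.inHPol μ) μ₂ _ _ key
  obtain ⟨P, _, hP, s, d, hds⟩ := hdim ν
  refine ⟨μ₃, hμ.trans hμ₂₃, P, ‹_›, hP, s.comp (k.comp (𝓨.bond (hμ₁.trans hμ₂₃))),
    g.comp d, ?_⟩
  have hb : 𝓨.bond (hμ.trans hμ₂₃) = (𝓨.bond hμ).comp (𝓨.bond hμ₂₃) :=
    (𝓨.bond_trans hμ hμ₂₃).symm
  rw [hb, ← heq]
  have hgd : g = (g.comp d).comp s := by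
    rw [HMap.comp_assoc, hds, HMap.comp_id]
  rw [HMap.comp_assoc (g.comp k), 𝓨.bond_trans]
  conv_lhs => rw [hgd]
  rw [HMap.comp_assoc, HMap.comp_assoc]

/-- **Theorem 2.16.** Let `F : X → Y` be a shape morphism of topological spaces (given,
with respect to HPol-expansions of `X` and `Y`, by a morphism of inverse systems `F`).
If `sd X ≤ n` or `sd Y ≤ n` then `sd F ≤ n`. -/
theorem shapeMor_sdLE_of_space (X Y : Type u) [TopologicalSpace X] [TopologicalSpace Y]
    (𝓧 𝓨 : InverseSystem.{u}) (pX : Expansion X 𝓧) (pY : Expansion Y 𝓨)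
    (F : SysMor 𝓧 𝓨) (n : ℕ) (h : ShapeDimLE X n ∨ ShapeDimLE Y n) :
    (ProMor.mk F).DimLE n := by
  refine ⟨F, rfl, ?_⟩
  intro μ
  rcases h with hX | hY
  · -- case `sd X ≤ n`
    obtain ⟨l, hl, hfac⟩ := factors_of_shapeDimLE_src pX hX (F.idxMap μ)
      (𝓨.obj μ) (𝓨.inHPol μ) (F.hmap μ)
    exact ⟨l, hl, hfac⟩
  · -- case `sd Y ≤ n`
    obtain ⟨μ', hμ, P, _, hP, u, v, hfac⟩ := bond_factors_of_shapeDimLE pY hY μ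
    obtain ⟨l, h₁, h₂, hcoh⟩ := F.coherent' hμ
    refine ⟨l, h₁, P, ‹_›, hP, u.comp (F.shift μ' h₂), v, ?_⟩
    have := hcoh (le_refl l)
    rw [SysMor.shift, ← this, hfac, HMap.comp_assoc]
    rfl

end ShapePaper
end
end

section
/- An H-map f : X → Y of topological spaces has shape dimension sd f ≤ n if and only if for every H-map h : Y → P into a space P belonging to HPol, the composition h ∘ f factors in HTop through a polyhedron P' with dim P' ≤ n, i.e., there are H-maps u : X → P' and v : P' → P such that h ∘ f = v ∘ u. -/
universe u

noncomputable section

namespace ShapePaper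

section Aux

variable {𝓧 𝓨 : InverseSystem.{u}}

theorem SysMor.Equiv.refl' (F : SysMor 𝓧 𝓨) : SysMor.Equiv F F :=
  fun μ => ⟨F.idxMap μ, le_refl _, le_refl _, rfl⟩

theorem SysMor.Equiv.symm' {F G : SysMor 𝓧 𝓨} (h : SysMor.Equiv F G) :
    SysMor.Equiv G F :=
  fun μ => let ⟨l, h₁, h₂, e⟩ := h μ; ⟨l, h₂, h₁, e.symm⟩

theorem SysMor.Equiv.trans' {F G H : SysMor 𝓧 𝓨} (hFG : SysMor.Equiv F G)
    (hGH : SysMor.Equiv G H) : SysMor.Equiv F H := by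
  intro μ
  obtain ⟨l₁, a₁, a₂, e₁⟩ := hFG μ
  obtain ⟨l₂, b₁, b₂, e₂⟩ := hGH μ
  obtain ⟨l, hl₁, hl₂⟩ := 𝓧.directed l₁ l₂
  refine ⟨l, a₁.trans hl₁, b₂.trans hl₂, ?_⟩
  calc F.shift μ (a₁.trans hl₁)
      = (F.shift μ a₁).comp (𝓧.bond hl₁) := (F.shift_comp μ a₁ hl₁).symm
    _ = (G.shift μ a₂).comp (𝓧.bond hl₁) := by rw [e₁]
    _ = G.shift μ (a₂.trans hl₁) := G.shift_comp μ a₂ hl₁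
    _ = (G.shift μ b₁).comp (𝓧.bond hl₂) := (G.shift_comp μ b₁ hl₂).symm
    _ = (H.shift μ b₂).comp (𝓧.bond hl₂) := by rw [e₂]
    _ = H.shift μ (b₂.trans hl₂) := H.shift_comp μ b₂ hl₂

theorem equiv_of_eqvGen {F G : SysMor 𝓧 𝓨}
    (h : Relation.EqvGen SysMor.Equiv F G) : SysMor.Equiv F G := by
  induction h with
  | rel _ _ h => exact h
  | refl _ => exact SysMor.Equiv.refl' _
  | symm _ _ _ ih => exact ih.symm'
  | trans _ _ _ _ _ ih₁ ih₂ => exact ih₁.trans' ih₂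

theorem IsPolyhedronDimLE.inHPol {P : Type u} [tP : TopologicalSpace P] {n : ℕ}
    (h : IsPolyhedronDimLE P n) : InHPol P := by
  obtain ⟨R, -⟩ := h
  exact ⟨P, tP, ⟨R⟩, ⟨ContinuousMap.HomotopyEquiv.refl P⟩⟩

theorem shift_proj {X : Type u} [TopologicalSpace X] (pX : Expansion X 𝓧)
    (F : SysMor 𝓧 𝓨) (μ : 𝓨.Idx) {l : 𝓧.Idx} (h : F.idxMap μ ≤ l) :
    (F.shift μ h).comp (pX.proj l) = (F.hmap μ).comp (pX.proj (F.idxMap μ)) := by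
  rw [SysMor.shift, HMap.comp_assoc, pX.proj_bond]

end Aux

/-- **Theorem 3.3.** An H-map `f : X → Y` (inducing, with respect to HPol-expansions of
`X` and `Y`, the morphism of inverse systems `F`) has shape dimension `sd f ≤ n` if
and only if for every H-map `h : Y → P` into a space `P ∈ HPol`, the composition
`h ∘ f` factors in HTop through a polyhedron `P'` with `dim P' ≤ n`, i.e. there are
H-maps `u : X → P'` and `v : P' → P` such that `h ∘ f = v ∘ u`. -/
theorem hmap_sdLE_iff_factorization (X Y : Type u)
    [TopologicalSpace X] [TopologicalSpace Y]
    (𝓧 𝓨 : InverseSystem.{u}) (pX : Expansion X 𝓧) (pY : Expansion Y 𝓨)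
    (f : HMap X Y) (F : SysMor 𝓧 𝓨) (hrep : Represents pX pY f F) (n : ℕ) :
    (ProMor.mk F).DimLE n ↔
      ∀ (P : Type u) (_ : TopologicalSpace P), InHPol P → ∀ h : HMap Y P,
        (h.comp f).FactorsThruPolyhedronDimLE n := by
  constructor
  · rintro ⟨G, hGF, hGdim⟩ P tP hP h
    have hequiv : SysMor.Equiv G F := equiv_of_eqvGen (Quot.eq.mp hGF)
    obtain ⟨μ, g, hg⟩ := pY.factors P hP h
    obtain ⟨l', hl', P₀, tP₀, hP₀, u, v, huv⟩ := hGdim μ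
    obtain ⟨l, h₁, h₂, heq⟩ := hequiv μ
    obtain ⟨l'', c₁, c₂⟩ := 𝓧.directed l l'
    refine ⟨P₀, tP₀, hP₀, (u.comp (𝓧.bond c₂)).comp (pX.proj l''), g.comp v, ?_⟩
    have e1 : F.shift μ (h₂.trans c₁) = (v.comp u).comp (𝓧.bond c₂) :=
      calc F.shift μ (h₂.trans c₁)
          = (F.shift μ h₂).comp (𝓧.bond c₁) := (F.shift_comp μ h₂ c₁).symm
        _ = (G.shift μ h₁).comp (𝓧.bond c₁) := by rw [heq]
        _ = G.shift μ (h₁.trans c₁) := G.shift_comp μ h₁ c₁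
        _ = (G.shift μ hl').comp (𝓧.bond c₂) := (G.shift_comp μ hl' c₂).symm
        _ = (v.comp u).comp (𝓧.bond c₂) := by rw [huv]
    calc h.comp f
        = (g.comp (pY.proj μ)).comp f := by rw [hg]
      _ = g.comp ((pY.proj μ).comp f) := HMap.comp_assoc _ _ _
      _ = g.comp ((F.hmap μ).comp (pX.proj (F.idxMap μ))) := by rw [hrep μ]
      _ = g.comp ((F.shift μ (h₂.trans c₁)).comp (pX.proj l'')) := by
          rw [shift_proj]
      _ = (g.comp v).comp ((u.comp (𝓧.bond c₂)).comp (pX.proj l'')) := by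
          rw [e1]; simp only [HMap.comp_assoc]
  · intro hfac
    refine ⟨F, rfl, ?_⟩
    intro μ
    obtain ⟨P', tP', hP', u, v, huv⟩ :=
      hfac (𝓨.obj μ) _ (𝓨.inHPol μ) (pY.proj μ)
    obtain ⟨l, w, hw⟩ := pX.factors P' hP'.inHPol u
    obtain ⟨l₀, d₁, d₂⟩ := 𝓧.directed l (F.idxMap μ)
    have key : ((v.comp w).comp (𝓧.bond d₁)).comp (pX.proj l₀)
        = (F.shift μ d₂).comp (pX.proj l₀) := by
      rw [shift_proj, hrep μ, huv, ← hw, HMap.comp_assoc, pX.proj_bond,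
        HMap.comp_assoc]
    obtain ⟨l₁, hl₁, heq⟩ := pX.factors_unique (𝓨.obj μ) (𝓨.inHPol μ) l₀ _ _ key
    refine ⟨l₁, d₂.trans hl₁, P', tP', hP',
      (w.comp (𝓧.bond d₁)).comp (𝓧.bond hl₁), v, ?_⟩
    rw [← F.shift_comp μ d₂ hl₁, ← heq]
    simp only [HMap.comp_assoc]

end ShapePaper
end
end
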